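/- arXiv:1904.05565 — 8 statements merged into one kernel-verified Lean document; each statement's English description precedes it below -/
import Mathlib

section
/- In a unital quantale Q, if d is a diagonal from p to q and e is a diagonal from q to r, then the composite e ⋄ d := (e ↙ q) ⊗ d is a diagonal from p to r. -/
variable {Q : Type*}

/-- Left implication in a quantale: `limp r q = r ↙ q`. -/
def limp [CompleteLattice Q] [Monoid Q] (r q : Q) : Q := sSup {p : Q | p * q ≤ r}

/-- Right implication in a quantale: `rimp p r = p ↘ r`. -/
def rimp [CompleteLattice Q] [Monoid Q] (p r : Q) : Q := sSup {q : Q | p * q ≤ r}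

/-- `d` is a diagonal from `p` to `q`: `(d ↙ p) ⊗ p = d = q ⊗ (q ↘ d)`. -/
def IsDiag [CompleteLattice Q] [Monoid Q] (p q d : Q) : Prop :=
  limp d p * p = d ∧ q * rimp q d = d

/-- `b` is a back diagonal from `p` to `q`: `p ↙ (b ↘ p) = b = (q ↙ b) ↘ q`. -/
def IsBackDiag [CompleteLattice Q] [Monoid Q] (p q b : Q) : Prop :=
  limp p (rimp b p) = b ∧ rimp (limp q b) q = b

theorem stmt7 [CompleteLattice Q] [Monoid Q]
    (hl : ∀ (p : Q) (S : Set Q), p * sSup S = ⨆ s ∈ S, p * s)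
    (hr : ∀ (q : Q) (S : Set Q), sSup S * q = ⨆ s ∈ S, s * q)
    (p q r d e : Q) (hd : IsDiag p q d) (he : IsDiag q r e) :
    IsDiag p r (limp e q * d) := by
  have monoL : ∀ a b c : Q, a ≤ b → c * a ≤ c * b := by
    intro a b c h
    have hb : c * b = c * sSup {a, b} := by rw [sSup_pair, sup_eq_right.mpr h]
    rw [hb, hl]
    exact le_trans le_rfl (le_iSup₂ (f := fun s (_ : s ∈ ({a, b} : Set Q)) => c * s) a
      (Set.mem_insert a {b}))
  have monoR : ∀ a b c : Q, a ≤ b → a * c ≤ b * c := by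
    intro a b c h
    have hb : b * c = sSup {a, b} * c := by rw [sSup_pair, sup_eq_right.mpr h]
    rw [hb, hr]
    exact le_trans le_rfl (le_iSup₂ (f := fun s (_ : s ∈ ({a, b} : Set Q)) => s * c) a
      (Set.mem_insert a {b}))
  have counitL : ∀ a b : Q, limp a b * b ≤ a := by
    intro a b
    rw [limp, hr]
    exact iSup₂_le fun s hs => hs
  have counitR : ∀ a b : Q, a * rimp a b ≤ b := by
    intro a b
    rw [rimp, hl]
    exact iSup₂_le fun s hs => hs
  set f := limp e q * d with hf
  constructor
  · have h1 : (limp e q * limp d p) * p = f := by rw [mul_assoc, hd.1]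
    have h2 : limp e q * limp d p ≤ limp f p := le_sSup h1.le
    have h4 : f ≤ limp f p * p := by
      conv_lhs => rw [← h1]
      exact monoR _ _ _ h2
    exact le_antisymm (counitL f p) h4
  · have h1 : r * (rimp r e * rimp q d) = f := by
      rw [← mul_assoc, he.2, ← he.1, mul_assoc, hd.2]
    have h2 : rimp r e * rimp q d ≤ rimp r f := le_sSup h1.le
    have h4 : f ≤ r * rimp r f := by
      conv_lhs => rw [← h1]
      exact monoL _ _ _ h2
    exact le_antisymm (counitR r f) h4
end

section
/- In a unital quantale Q, the composition of diagonals is associative and unital: for a diagonal d from p to q, one has d ⋄ p = d = q ⋄ d; and for diagonals d from p to q, e from q to r, f from r to s, one has f ⋄ (e ⋄ d) = (f ⋄ e) ⋄ d. -/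
variable {Q : Type*}

section Aux
variable [CompleteLattice Q] [Monoid Q]

lemma limp_mul_le (hr : ∀ (q : Q) (S : Set Q), sSup S * q = ⨆ s ∈ S, s * q)
    (d q : Q) : limp d q * q ≤ d := by
  rw [limp, hr]
  exact iSup₂_le fun x hx => hx

lemma le_limp (x d q : Q) (h : x * q ≤ d) : x ≤ limp d q := le_sSup h

lemma mul_le_mul_right'' (hr : ∀ (q : Q) (S : Set Q), sSup S * q = ⨆ s ∈ S, s * q)
    {a b : Q} (c : Q) (h : a ≤ b) : a * c ≤ b * c := by
  have : sSup {a, b} = b := by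
    rw [sSup_pair, sup_eq_right.mpr h]
  calc a * c ≤ ⨆ s ∈ ({a, b} : Set Q), s * c := le_iSup₂ (f := fun s _ => s * c) a (Set.mem_insert a {b})
    _ = b * c := by rw [← hr, this]

end Aux

theorem stmt8 [CompleteLattice Q] [Monoid Q]
    (hl : ∀ (p : Q) (S : Set Q), p * sSup S = ⨆ s ∈ S, p * s)
    (hr : ∀ (q : Q) (S : Set Q), sSup S * q = ⨆ s ∈ S, s * q)
    (p q r s d e f : Q) (hd : IsDiag p q d) (he : IsDiag q r e) (hf : IsDiag r s f) :
    limp d p * p = d ∧ limp q q * d = d ∧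
      limp f r * (limp e q * d) = limp (limp f r * e) q * d := by
  refine ⟨hd.1, ?_, ?_⟩
  · -- unit law
    apply le_antisymm
    · calc limp q q * d = limp q q * (q * rimp q d) := by rw [hd.2]
        _ = (limp q q * q) * rimp q d := (mul_assoc _ _ _).symm
        _ ≤ q * rimp q d := mul_le_mul_right'' hr _ (limp_mul_le hr q q)
        _ = d := hd.2
    · calc d = 1 * d := (one_mul d).symm
        _ ≤ limp q q * d := mul_le_mul_right'' hr d (le_limp 1 q q (by rw [one_mul]))
  · -- associativity
    set g := limp f r * e with hg
    have hgq : limp g q * q = g := by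
      apply le_antisymm (limp_mul_le hr g q)
      have : g = (limp f r * limp e q) * q := by
        rw [mul_assoc, he.1]
      calc g = (limp f r * limp e q) * q := this
        _ ≤ limp g q * q :=
          mul_le_mul_right'' hr q (le_limp _ g q (by rw [← this]))
    calc limp f r * (limp e q * d)
        = limp f r * (limp e q * (q * rimp q d)) := by rw [hd.2]
      _ = limp f r * ((limp e q * q) * rimp q d) := by rw [mul_assoc]
      _ = (limp f r * e) * rimp q d := by rw [he.1, mul_assoc]
      _ = (limp g q * q) * rimp q d := by rw [hgq]
      _ = limp g q * (q * rimp q d) := mul_assoc _ _ _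
      _ = limp (limp f r * e) q * d := by rw [hd.2, hg]
end

section
/- In a unital quantale Q, if b is a back diagonal from p to q and c is a back diagonal from q to r, then b ↙ (c ↘ q) = (q ↙ b) ↘ c. -/
variable {Q : Type*}

lemma rimp_adj [CompleteLattice Q] [Monoid Q]
    (hl : ∀ (p : Q) (S : Set Q), p * sSup S = ⨆ s ∈ S, p * s)
    (u z y : Q) : y ≤ rimp u z ↔ u * y ≤ z := by
  constructor
  · intro h
    have h1 : u * rimp u z ≤ z := by
      rw [rimp, hl]; exact iSup₂_le fun s hs => hs
    refine le_trans ?_ h1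
    have h2 := hl u {y, rimp u z}
    rw [sSup_pair, sup_eq_right.mpr h] at h2
    rw [h2]
    exact le_iSup₂_of_le y (Set.mem_insert y _) le_rfl
  · intro h; exact le_sSup h

lemma limp_adj [CompleteLattice Q] [Monoid Q]
    (hr : ∀ (q : Q) (S : Set Q), sSup S * q = ⨆ s ∈ S, s * q)
    (z v x : Q) : x ≤ limp z v ↔ x * v ≤ z := by
  constructor
  · intro h
    have h1 : limp z v * v ≤ z := by
      rw [limp, hr]; exact iSup₂_le fun s hs => hs
    refine le_trans ?_ h1
    have h2 := hr v {x, limp z v}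
    rw [sSup_pair, sup_eq_right.mpr h] at h2
    rw [h2]
    exact le_iSup₂_of_le x (Set.mem_insert x _) le_rfl
  · intro h; exact le_sSup h

theorem stmt13 [CompleteLattice Q] [Monoid Q]
    (hl : ∀ (p : Q) (S : Set Q), p * sSup S = ⨆ s ∈ S, p * s)
    (hr : ∀ (q : Q) (S : Set Q), sSup S * q = ⨆ s ∈ S, s * q)
    (p q r b c : Q) (hb : IsBackDiag p q b) (hc : IsBackDiag q r c) :
    limp b (rimp c q) = rimp (limp q b) c := by
  obtain ⟨-, hb2⟩ := hb
  obtain ⟨hc1, -⟩ := hc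
  have h1 : limp b (rimp c q) = sSup {x : Q | limp q b * x * rimp c q ≤ q} := by
    rw [limp]; congr 1; ext x
    rw [Set.mem_setOf_eq, Set.mem_setOf_eq]
    nth_rewrite 1 [← hb2]
    rw [rimp_adj hl, mul_assoc]
  have h2 : rimp (limp q b) c = sSup {x : Q | limp q b * x * rimp c q ≤ q} := by
    rw [rimp]; congr 1; ext x
    rw [Set.mem_setOf_eq, Set.mem_setOf_eq]
    nth_rewrite 1 [← hc1]
    rw [limp_adj hr]
  rw [h1, h2]
end

section
/- In a unital quantale Q, if b is a back diagonal from p to q and c is a back diagonal from q to r, then the composite c • b := b ↙ (c ↘ q) is a back diagonal from p to r; moreover b • p = b = q • b. -/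
variable {Q : Type*}

theorem stmt14 [CompleteLattice Q] [Monoid Q]
    (hl : ∀ (p : Q) (S : Set Q), p * sSup S = ⨆ s ∈ S, p * s)
    (hr : ∀ (q : Q) (S : Set Q), sSup S * q = ⨆ s ∈ S, s * q)
    (p q r b c : Q) (hb : IsBackDiag p q b) (hc : IsBackDiag q r c) :
    IsBackDiag p r (limp b (rimp c q)) ∧
      limp p (rimp b p) = b ∧ limp b (rimp q q) = b := by
  -- monotonicity of multiplication, from the distributivity hypotheses
  have monoR : ∀ {a b : Q} (c : Q), a ≤ b → a * c ≤ b * c := by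
    intro a b c h
    have h2 := hr c {a, b}
    rw [sSup_pair, iSup_pair, sup_eq_right.mpr h] at h2
    calc a * c ≤ a * c ⊔ b * c := le_sup_left
      _ = b * c := h2.symm
  have monoL : ∀ (c : Q) {a b : Q}, a ≤ b → c * a ≤ c * b := by
    intro c a b h
    have h2 := hl c {a, b}
    rw [sSup_pair, iSup_pair, sup_eq_right.mpr h] at h2
    calc c * a ≤ c * a ⊔ c * b := le_sup_left
      _ = c * b := h2.symm
  -- the Galois adjunctions
  have llim : ∀ {a r q : Q}, a ≤ limp r q ↔ a * q ≤ r := by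
    intro a r q
    constructor
    · intro h
      calc a * q ≤ limp r q * q := monoR q h
        _ ≤ r := by
            rw [limp, hr]
            exact iSup₂_le fun s hs => hs
    · intro h
      exact le_sSup h
  have lrim : ∀ {a p r : Q}, a ≤ rimp p r ↔ p * a ≤ r := by
    intro a p r
    constructor
    · intro h
      calc p * a ≤ p * rimp p r := monoL p h
        _ ≤ r := by
            rw [rimp, hl]
            exact iSup₂_le fun s hs => hs
    · intro h
      exact le_sSup h
  have limp_mul : ∀ r q : Q, limp r q * q ≤ r := fun r q => llim.mp le_rfl
  have mul_rimp : ∀ p r : Q, p * rimp p r ≤ r := fun p r => lrim.mp le_rfl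
  obtain ⟨hb1, hb2⟩ := hb
  obtain ⟨hc1, hc2⟩ := hc
  set d := limp b (rimp c q) with hd
  have hdc : d * rimp c q ≤ b := limp_mul _ _
  have key1 : rimp c q * rimp b p ≤ rimp d p := lrim.mpr (by
    rw [← mul_assoc]
    exact le_trans (monoR _ hdc) (mul_rimp b p))
  have g1 : limp p (rimp d p) = d := by
    apply le_antisymm
    · conv_rhs => rw [hd]
      apply llim.mpr
      rw [← hb1]
      apply llim.mpr
      rw [mul_assoc]
      exact le_trans (monoL _ key1) (limp_mul p _)
    · exact llim.mpr (mul_rimp d p)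
  have key2 : limp q b * d ≤ c := by
    rw [← hc1]
    apply llim.mpr
    rw [mul_assoc]
    exact le_trans (monoL _ hdc) (limp_mul q b)
  have key3 : limp r c * limp q b ≤ limp r d := llim.mpr (by
    rw [mul_assoc]
    exact le_trans (monoL _ key2) (limp_mul r c))
  have g2 : rimp (limp r d) r = d := by
    apply le_antisymm
    · conv_rhs => rw [hd]
      apply llim.mpr
      rw [← hb2]
      apply lrim.mpr
      rw [← mul_assoc]
      have hkc : limp q b * rimp (limp r d) r ≤ c := by
        rw [← hc2]
        apply lrim.mpr
        rw [← mul_assoc]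
        exact le_trans (monoR _ key3) (mul_rimp (limp r d) r)
      exact le_trans (monoR _ hkc) (mul_rimp c q)
    · exact lrim.mpr (limp_mul r d)
  have g3 : limp b (rimp q q) = b := by
    apply le_antisymm
    · have h1 : (1 : Q) ≤ rimp q q := lrim.mpr (by rw [mul_one])
      calc limp b (rimp q q) = limp b (rimp q q) * 1 := (mul_one _).symm
        _ ≤ limp b (rimp q q) * rimp q q := monoL _ h1
        _ ≤ b := limp_mul _ _
    · apply llim.mpr
      conv_rhs => rw [← hb2]
      apply lrim.mpr
      rw [← mul_assoc]
      exact le_trans (monoR _ (limp_mul q b)) (mul_rimp q q)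
  exact ⟨⟨g1, g2⟩, hb1, g3⟩
end

section
/- Let Q be a divisible quantale (so in particular integral, with unit k = ⊤) and let ¬ₗ q := ⊥ ↙ q. If b satisfies p ∨ q ≤ b and p ↙ (b ↘ p) = b = (q ↙ b) ↘ q (i.e., b is a back diagonal from p to q above p ∨ q), then ¬ₗ b is a diagonal from ¬ₗ p to ¬ₗ q with ¬ₗ b ≤ ¬ₗ p ∧ ¬ₗ q. -/
variable {Q : Type*}

theorem stmt15 [CompleteLattice Q] [Monoid Q]
    (hl : ∀ (p : Q) (S : Set Q), p * sSup S = ⨆ s ∈ S, p * s)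
    (hr : ∀ (q : Q) (S : Set Q), sSup S * q = ⨆ s ∈ S, s * q)
    (hdiv : ∀ u v : Q, u ≤ v → limp u v * v = u ∧ v * rimp v u = u)
    (hint : (1 : Q) = ⊤)
    (p q b : Q) (hpq : p ⊔ q ≤ b) (hb : IsBackDiag p q b) :
    IsDiag (limp ⊥ p) (limp ⊥ q) (limp ⊥ b) ∧
      limp ⊥ b ≤ limp ⊥ p ⊓ limp ⊥ q := by
  have hmono : ∀ x y z : Q, x ≤ y → z * x ≤ z * y := by
    intro x y z hxy
    have h := hl z {x, y}
    rw [sSup_pair, sup_eq_right.mpr hxy] at h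
    rw [h]
    exact le_biSup _ (Set.mem_insert x {y})
  have hanti : ∀ x y : Q, x ≤ y → limp ⊥ y ≤ limp ⊥ x := by
    intro x y hxy
    refine sSup_le fun z hz => le_sSup ?_
    exact le_trans (hmono x y z hxy) hz
  have hp : limp ⊥ b ≤ limp ⊥ p := hanti p b (le_trans le_sup_left hpq)
  have hq : limp ⊥ b ≤ limp ⊥ q := hanti q b (le_trans le_sup_right hpq)
  exact ⟨⟨(hdiv _ _ hp).1, (hdiv _ _ hq).2⟩, le_inf hp hq⟩
end

section
/- Let Ω be a frame and ¬q := q → ⊥. If d ≤ p ∧ q (so that d is a diagonal from p to q in Ω), then ¬d is a back diagonal from ¬p to ¬q, i.e., (¬d → ¬p) → ¬p = ¬d = (¬d → ¬q) → ¬q; moreover, for d ≤ p ∧ q and e ≤ q ∧ r, one has ¬(e ∧ d) = (¬d → ¬q) → ¬e. -/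
private lemma aux17 {Ω : Type*} [Order.Frame Ω] {a b : Ω} (h : a ≤ b) :
    ((a ⇨ ⊥) ⇨ (b ⇨ ⊥)) ⇨ (b ⇨ ⊥) = a ⇨ ⊥ := by
  have ha : a ≤ (a ⇨ ⊥) ⇨ (b ⇨ ⊥) := by
    rw [le_himp_iff, le_himp_iff]
    calc a ⊓ (a ⇨ ⊥) ⊓ b ≤ a ⊓ (a ⇨ ⊥) := inf_le_left
    _ ≤ ⊥ := by simp [inf_himp_le]
  apply le_antisymm
  · rw [le_himp_iff]
    calc (((a ⇨ ⊥) ⇨ (b ⇨ ⊥)) ⇨ (b ⇨ ⊥)) ⊓ a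
        ≤ (((a ⇨ ⊥) ⇨ (b ⇨ ⊥)) ⇨ (b ⇨ ⊥)) ⊓ (((a ⇨ ⊥) ⇨ (b ⇨ ⊥)) ⊓ b) := by
          exact inf_le_inf_left _ (le_inf ha h)
      _ ≤ (b ⇨ ⊥) ⊓ b := by
          rw [← inf_assoc]
          exact inf_le_inf_right _ (by exact himp_inf_le)
      _ ≤ ⊥ := himp_inf_le
  · rw [le_himp_iff, le_himp_iff]
    calc (a ⇨ ⊥) ⊓ ((a ⇨ ⊥) ⇨ (b ⇨ ⊥)) ⊓ b
        ≤ (b ⇨ ⊥) ⊓ b := inf_le_inf_right _ inf_himp_le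
      _ ≤ ⊥ := himp_inf_le

theorem stmt17 {Ω : Type*} [Order.Frame Ω] (p q r d e : Ω)
    (hd : d ≤ p ⊓ q) (he : e ≤ q ⊓ r) :
    (((d ⇨ ⊥) ⇨ (p ⇨ ⊥)) ⇨ (p ⇨ ⊥)) = d ⇨ ⊥ ∧
      (((d ⇨ ⊥) ⇨ (q ⇨ ⊥)) ⇨ (q ⇨ ⊥)) = d ⇨ ⊥ ∧
      ((e ⊓ d) ⇨ ⊥) = ((d ⇨ ⊥) ⇨ (q ⇨ ⊥)) ⇨ (e ⇨ ⊥) := by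
  have hdp : d ≤ p := hd.trans inf_le_left
  have hdq : d ≤ q := hd.trans inf_le_right
  have heq : e ≤ q := he.trans inf_le_left
  refine ⟨aux17 hdp, aux17 hdq, le_antisymm ?_ ?_⟩
  · rw [le_himp_iff, le_himp_iff]
    -- goal: (e ⊓ d ⇨ ⊥) ⊓ ((d⇨⊥)⇨(q⇨⊥)) ⊓ e ≤ ⊥
    have h1 : (e ⊓ d ⇨ ⊥) ⊓ e ≤ d ⇨ ⊥ := by
      rw [le_himp_iff]
      calc (e ⊓ d ⇨ ⊥) ⊓ e ⊓ d = (e ⊓ d ⇨ ⊥) ⊓ (e ⊓ d) := by rw [inf_assoc]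
        _ ≤ ⊥ := by exact himp_inf_le
    calc (e ⊓ d ⇨ ⊥) ⊓ ((d ⇨ ⊥) ⇨ (q ⇨ ⊥)) ⊓ e
        ≤ ((d ⇨ ⊥) ⊓ ((d ⇨ ⊥) ⇨ (q ⇨ ⊥))) ⊓ q := by
          refine le_inf (le_inf ?_ ?_) ?_
          · calc _ ≤ (e ⊓ d ⇨ ⊥) ⊓ e := by
                  exact le_inf (inf_le_left.trans inf_le_left) inf_le_right
              _ ≤ d ⇨ ⊥ := h1
          · exact inf_le_left.trans inf_le_right
          · exact inf_le_right.trans heq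
      _ ≤ (q ⇨ ⊥) ⊓ q := inf_le_inf_right _ inf_himp_le
      _ ≤ ⊥ := himp_inf_le
  · rw [le_himp_iff, ← inf_assoc]
    -- goal: (((d⇨⊥)⇨(q⇨⊥)) ⇨ (e⇨⊥)) ⊓ e ⊓ d ≤ ⊥  (order?)
    have hdh : d ≤ (d ⇨ ⊥) ⇨ (q ⇨ ⊥) := by
      rw [le_himp_iff, le_himp_iff]
      calc d ⊓ (d ⇨ ⊥) ⊓ q ≤ d ⊓ (d ⇨ ⊥) := inf_le_left
        _ ≤ ⊥ := by simp [inf_himp_le]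
    calc (((d ⇨ ⊥) ⇨ (q ⇨ ⊥)) ⇨ (e ⇨ ⊥)) ⊓ e ⊓ d
        ≤ ((((d ⇨ ⊥) ⇨ (q ⇨ ⊥)) ⇨ (e ⇨ ⊥)) ⊓ ((d ⇨ ⊥) ⇨ (q ⇨ ⊥))) ⊓ e := by
          refine le_inf (le_inf (inf_le_left.trans inf_le_left) (inf_le_right.trans hdh)) ?_
          exact inf_le_left.trans inf_le_right
      _ ≤ (e ⇨ ⊥) ⊓ e := inf_le_inf_right _ himp_inf_le
      _ ≤ ⊥ := himp_inf_le
end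

section
/- Let Q be a Girard quantale with cyclic dualizing element m, and set q^⊥ := m ↙ q = q ↘ m. Then q^⊥⊥ = q for all q ∈ Q; if b is a back diagonal from p to q (i.e., p ↙ (b ↘ p) = b = (q ↙ b) ↘ q), then b^⊥ is a diagonal from p^⊥ to q^⊥ (i.e., (b^⊥ ↙ p^⊥) ⊗ p^⊥ = b^⊥ = q^⊥ ⊗ (q^⊥ ↘ b^⊥)); and for back diagonals b : p ⟼ q and c : q ⟼ r, the linear negation preserves composition: c^⊥ ⋄ b^⊥ = (c • b)^⊥, where c • b = b ↙ (c ↘ q) and c^⊥ ⋄ b^⊥ = (c^⊥ ↙ q^⊥) ⊗ b^⊥. -/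
variable {Q : Type*}

section Aux
variable [CompleteLattice Q] [Monoid Q]

lemma mulRightMono (hr : ∀ (q : Q) (S : Set Q), sSup S * q = ⨆ s ∈ S, s * q)
    {a b : Q} (h : a ≤ b) (c : Q) : a * c ≤ b * c := by
  have hb : b * c = ⨆ s ∈ ({a, b} : Set Q), s * c := by
    rw [← hr, sSup_pair, sup_eq_right.mpr h]
  rw [hb]
  exact le_iSup₂ (f := fun s (_ : s ∈ ({a, b} : Set Q)) => s * c) a (Set.mem_insert a {b})

lemma mulLeftMono (hl : ∀ (p : Q) (S : Set Q), p * sSup S = ⨆ s ∈ S, p * s)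
    {a b : Q} (h : a ≤ b) (c : Q) : c * a ≤ c * b := by
  have hb : c * b = ⨆ s ∈ ({a, b} : Set Q), c * s := by
    rw [← hl, sSup_pair, sup_eq_right.mpr h]
  rw [hb]
  exact le_iSup₂ (f := fun s (_ : s ∈ ({a, b} : Set Q)) => c * s) a (Set.mem_insert a {b})

lemma limpMulLe (hr : ∀ (q : Q) (S : Set Q), sSup S * q = ⨆ s ∈ S, s * q)
    (r q : Q) : limp r q * q ≤ r := by
  rw [limp, hr]
  exact iSup₂_le fun s hs => hs

lemma mulRimpLe (hl : ∀ (p : Q) (S : Set Q), p * sSup S = ⨆ s ∈ S, p * s)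
    (p r : Q) : p * rimp p r ≤ r := by
  rw [rimp, hl]
  exact iSup₂_le fun s hs => hs

lemma mulLeLimp (hr : ∀ (q : Q) (S : Set Q), sSup S * q = ⨆ s ∈ S, s * q)
    {p q r : Q} : p * q ≤ r ↔ p ≤ limp r q :=
  ⟨fun h => le_sSup h, fun h => (mulRightMono hr h q).trans (limpMulLe hr r q)⟩

lemma leRimp (hl : ∀ (p : Q) (S : Set Q), p * sSup S = ⨆ s ∈ S, p * s)
    {p q r : Q} : p * q ≤ r ↔ q ≤ rimp p r :=
  ⟨fun h => le_sSup h, fun h => (mulLeftMono hl h p).trans (mulRimpLe hl p r)⟩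

end Aux

theorem stmt18 [CompleteLattice Q] [Monoid Q]
    (hl : ∀ (p : Q) (S : Set Q), p * sSup S = ⨆ s ∈ S, p * s)
    (hr : ∀ (q : Q) (S : Set Q), sSup S * q = ⨆ s ∈ S, s * q)
    (m : Q) (hcyc : ∀ x : Q, limp m x = rimp x m)
    (hdual : ∀ x : Q, rimp (limp m x) m = x ∧ limp m (rimp x m) = x)
    (p q r b c : Q) :
    (∀ x : Q, limp m (limp m x) = x) ∧
      (IsBackDiag p q b → IsDiag (limp m p) (limp m q) (limp m b)) ∧
      (IsBackDiag p q b → IsBackDiag q r c →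
        limp (limp m c) (limp m q) * limp m b = limp m (limp b (rimp c q))) := by
  have hNN : ∀ x : Q, limp m (limp m x) = x := by
    intro x
    rw [hcyc (limp m x)]
    exact (hdual x).1
  have mulLimp : ∀ x : Q, x * limp m x ≤ m := by
    intro x
    rw [hcyc]
    exact mulRimpLe hl x m
  have limpMul : ∀ x : Q, limp m x * x ≤ m := fun x => limpMulLe hr m x
  -- key identity for limp
  have L2 : ∀ r' q' : Q, limp r' q' = limp m (q' * limp m r') := by
    intro r' q'
    apply le_antisymm
    · apply (mulLeLimp hr).mp
      rw [← mul_assoc]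
      exact ((mulRightMono hr (limpMulLe hr r' q') (limp m r'))).trans (mulLimp r')
    · apply (mulLeLimp hr).mp
      refine le_trans ?_ (le_of_eq (hNN r'))
      apply (mulLeLimp hr).mp
      rw [mul_assoc]
      exact limpMul _
  -- key identity for rimp
  have L3 : ∀ p' r' : Q, rimp p' r' = rimp (limp m r' * p') m := by
    intro p' r'
    apply le_antisymm
    · apply (leRimp hl).mp
      rw [mul_assoc]
      exact (mulLeftMono hl (mulRimpLe hl p' r') (limp m r')).trans (limpMul r')
    · apply (leRimp hl).mp
      refine le_trans ?_ (le_of_eq (hdual r').1)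
      apply (leRimp hl).mp
      rw [← mul_assoc]
      exact mulRimpLe hl _ m
  refine ⟨hNN, ?_, ?_⟩
  · rintro ⟨hb1, hb2⟩
    constructor
    · -- limp (limp m b) (limp m p) * limp m p = limp m b
      have e1 : rimp b p = limp m (limp m p * b) := by
        rw [L3 b p, ← hcyc]
      have h := hb1
      rw [L2 p (rimp b p), e1] at h
      have key := congrArg (limp m) h
      rw [hNN] at key
      have g : limp (limp m b) (limp m p) = limp m (limp m p * b) := by
        rw [L2 (limp m b) (limp m p), hNN]
      rw [g]
      exact key
    · -- limp m q * rimp (limp m q) (limp m b) = limp m b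
      have e1 : limp q b = limp m (b * limp m q) := L2 q b
      have e2 : rimp (limp m (b * limp m q)) q
          = limp m (limp m q * limp m (b * limp m q)) := by
        rw [L3 _ q, ← hcyc]
      have h := hb2
      rw [e1, e2] at h
      have key := congrArg (limp m) h
      rw [hNN] at key
      have g : rimp (limp m q) (limp m b) = limp m (b * limp m q) := by
        rw [L3 (limp m q) (limp m b), hNN, ← hcyc]
      rw [g]
      exact key
  · intro _ _
    have g1 : limp (limp m c) (limp m q) = limp m (limp m q * c) := by
      rw [L2 (limp m c) (limp m q), hNN]
    have g2 : rimp c q = limp m (limp m q * c) := by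
      rw [L3 c q, ← hcyc]
    rw [g1, g2, L2 b (limp m (limp m q * c)), hNN]
end

section
/- Let Q be a unital quantale and q ∈ Q a cyclic element (q ↙ p = p ↘ q for all p). Then the set B(q,q) of back diagonals from q to q, equipped with the composition c • b := b ↙ (c ↘ q), unit q, and the order reversed from Q, is a Girard quantale with cyclic dualizing element m_q := q ↙ q = q ↘ q; in particular, for all b, c ∈ B(q,q), the implications in B(q,q) are given by c ⧸ b = q ↙ (c ↘ b) and b ⧹ c = (b ↙ c) ↘ q, and m_q ⧸ b = q ↙ b = b ↘ q = b ⧹ m_q, with m_q ⧸ (b ⧹ m_q) = b = (m_q ⧸ b) ⧹ m_q. -/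
variable {Q : Type*}

section Aux
variable [CompleteLattice Q] [Monoid Q]

lemma mul_mono_r' (hr : ∀ (q : Q) (S : Set Q), sSup S * q = ⨆ s ∈ S, s * q)
    {a b : Q} (h : a ≤ b) (s : Q) : a * s ≤ b * s := by
  have hb : b * s = sSup {a, b} * s := by rw [sSup_pair, sup_eq_right.2 h]
  rw [hb, hr]
  exact le_iSup_of_le a (le_iSup_of_le (Set.mem_insert a {b}) le_rfl)

lemma mul_mono_l' (hl : ∀ (p : Q) (S : Set Q), p * sSup S = ⨆ s ∈ S, p * s)
    {a b : Q} (h : a ≤ b) (s : Q) : s * a ≤ s * b := by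
  have hb : s * b = s * sSup {a, b} := by rw [sSup_pair, sup_eq_right.2 h]
  rw [hb, hl]
  exact le_iSup_of_le a (le_iSup_of_le (Set.mem_insert a {b}) le_rfl)

lemma adj_l (hr : ∀ (q : Q) (S : Set Q), sSup S * q = ⨆ s ∈ S, s * q)
    {p s r : Q} : p * s ≤ r ↔ p ≤ limp r s := by
  constructor
  · exact fun h => le_sSup h
  · intro h
    calc p * s ≤ limp r s * s := mul_mono_r' hr h s
    _ ≤ r := by
        rw [limp, hr]
        exact iSup_le fun t => iSup_le fun ht => ht

lemma adj_r (hl : ∀ (p : Q) (S : Set Q), p * sSup S = ⨆ s ∈ S, p * s)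
    {p s r : Q} : p * s ≤ r ↔ s ≤ rimp p r := by
  constructor
  · exact fun h => le_sSup h
  · intro h
    calc p * s ≤ p * rimp p r := mul_mono_l' hl h p
    _ ≤ r := by
        rw [rimp, hl]
        exact iSup_le fun t => iSup_le fun ht => ht

/-- `limp (limp q y) x = limp q (x * y)`. -/
lemma limp_limp (hr : ∀ (q : Q) (S : Set Q), sSup S * q = ⨆ s ∈ S, s * q)
    (q x y : Q) : limp (limp q y) x = limp q (x * y) := by
  have hset : {p : Q | p * x ≤ limp q y} = {p : Q | p * (x * y) ≤ q} := by
    ext p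
    simp only [Set.mem_setOf_eq, ← mul_assoc]
    exact (adj_l hr).symm
  rw [limp, hset]
  rfl

/-- `rimp x (rimp y q) = rimp (y * x) q`. -/
lemma rimp_rimp (hl : ∀ (p : Q) (S : Set Q), p * sSup S = ⨆ s ∈ S, p * s)
    (q x y : Q) : rimp x (rimp y q) = rimp (y * x) q := by
  have hset : {s : Q | x * s ≤ rimp y q} = {s : Q | (y * x) * s ≤ q} := by
    ext s
    simp only [Set.mem_setOf_eq, mul_assoc]
    exact (adj_r hl).symm
  rw [rimp, hset]
  rfl

end Aux

section Main
set_option linter.unusedSectionVars false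
variable [CompleteLattice Q] [Monoid Q]
variable (hl : ∀ (p : Q) (S : Set Q), p * sSup S = ⨆ s ∈ S, p * s)
variable (hr : ∀ (q : Q) (S : Set Q), sSup S * q = ⨆ s ∈ S, s * q)
variable (q : Q) (hcyc : ∀ p : Q, limp q p = rimp p q)

include hl hr hcyc

/-- The symmetric Galois connection: `a ≤ ¬b ↔ b ≤ ¬a`. -/
lemma gal {a b : Q} : a ≤ rimp b q ↔ b ≤ rimp a q := by
  rw [← adj_r hl, ← hcyc a, ← adj_l hr]

lemma le_nn (x : Q) : x ≤ rimp (rimp x q) q :=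
  (gal hl hr q hcyc).mp le_rfl

lemma n_anti {x y : Q} (h : x ≤ y) : rimp y q ≤ rimp x q :=
  (gal hl hr q hcyc).mpr (h.trans (le_nn hl hr q hcyc y))

lemma nnn (x : Q) : rimp (rimp (rimp x q) q) q = rimp x q :=
  le_antisymm (n_anti hl hr q hcyc (le_nn hl hr q hcyc x)) (le_nn hl hr q hcyc (rimp x q))

/-- Closedness from being a back diagonal. -/
lemma closed_of_bd {b : Q} (hb : IsBackDiag q q b) : rimp (rimp b q) q = b := by
  have := hb.2
  rwa [hcyc b] at this

/-- Every `¬y` is a back diagonal. -/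
lemma bd_of_n (y : Q) : IsBackDiag q q (rimp y q) := by
  constructor
  · rw [hcyc, nnn hl hr q hcyc]
  · rw [hcyc, nnn hl hr q hcyc]

lemma one_le_nq : (1 : Q) ≤ rimp q q := by
  rw [← adj_r hl, mul_one]

lemma q_mul_nq : q * rimp q q ≤ q := (adj_r hl).mpr le_rfl

lemma nq_mul_q : rimp q q * q ≤ q := by
  rw [← hcyc q]; exact (adj_l hr).mpr le_rfl

lemma nb_mul_b {b : Q} : rimp b q * b ≤ q := by
  rw [← hcyc b]; exact (adj_l hr).mpr le_rfl

lemma b_mul_nb {b : Q} : b * rimp b q ≤ q := (adj_r hl).mpr le_rfl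

/-- For closed `b`, `¬q ↘ b = b`. -/
lemma rimp_nq (b : Q) (hb : IsBackDiag q q b) : rimp (rimp q q) b = b := by
  apply le_antisymm
  · rw [rimp]
    apply sSup_le
    intro s hs
    calc s = 1 * s := (one_mul s).symm
    _ ≤ rimp q q * s := mul_mono_r' hr (one_le_nq hl hr q hcyc) s
    _ ≤ b := hs
  · rw [← adj_r hl]
    calc rimp q q * b ≤ limp q (rimp b q) := by
          rw [← adj_l hr, mul_assoc]
          calc rimp q q * (b * rimp b q) ≤ rimp q q * q :=
            mul_mono_l' hl (b_mul_nb hl hr q hcyc) _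
          _ ≤ q := nq_mul_q hl hr q hcyc
    _ = b := hb.1

/-- For closed `b`, `b ↙ ¬q = b`. -/
lemma limp_nq (b : Q) (hb : IsBackDiag q q b) : limp b (rimp q q) = b := by
  apply le_antisymm
  · rw [limp]
    apply sSup_le
    intro s hs
    calc s = s * 1 := (mul_one s).symm
    _ ≤ s * rimp q q := mul_mono_l' hl (one_le_nq hl hr q hcyc) s
    _ ≤ b := hs
  · rw [← adj_l hr]
    calc b * rimp q q ≤ rimp (rimp b q) q := by
          rw [← adj_r hl, ← mul_assoc]
          calc rimp b q * b * rimp q q ≤ q * rimp q q :=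
            mul_mono_r' hr (nb_mul_b hl hr q hcyc) _
          _ ≤ q := q_mul_nq hl hr q hcyc
    _ = b := closed_of_bd hl hr q hcyc hb

/-- For closed `u` and `z`: `¬u ≤ z ↔ ¬z ≤ u`. -/
lemma n_le_closed {u z : Q} (hu : IsBackDiag q q u) (hz : IsBackDiag q q z) :
    rimp u q ≤ z ↔ rimp z q ≤ u := by
  constructor
  · intro h
    have := n_anti hl hr q hcyc h
    rwa [closed_of_bd hl hr q hcyc hu] at this
  · intro h
    have := n_anti hl hr q hcyc h
    rwa [closed_of_bd hl hr q hcyc hz] at this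

end Main

theorem stmt19 [CompleteLattice Q] [Monoid Q]
    (hl : ∀ (p : Q) (S : Set Q), p * sSup S = ⨆ s ∈ S, p * s)
    (hr : ∀ (q : Q) (S : Set Q), sSup S * q = ⨆ s ∈ S, s * q)
    (q : Q) (hcyc : ∀ p : Q, limp q p = rimp p q)
    (b c : Q) (hb : IsBackDiag q q b) (hc : IsBackDiag q q c) :
    -- B(q,q) is closed under the composition c • b := b ↙ (c ↘ q) and contains the unit q
    IsBackDiag q q (limp b (rimp c q)) ∧ IsBackDiag q q q ∧
      -- unit laws : b • q = b = q • b
      limp q (rimp b q) = b ∧ limp b (rimp q q) = b ∧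
      -- the implications of the quantale B(q,q) (with reversed order) are
      -- c ⧸ b = q ↙ (c ↘ b) and b ⧹ c = (b ↙ c) ↘ q, via the adjunctions
      (∀ x : Q, IsBackDiag q q x →
        ((c ≤ limp b (rimp x q) ↔ limp q (rimp c b) ≤ x) ∧
         (c ≤ limp x (rimp b q) ↔ rimp (limp b c) q ≤ x))) ∧
      -- m_q := q ↙ q = q ↘ q is cyclic : m_q ⧸ b = q ↙ b = b ↘ q = b ⧹ m_q
      limp q q = rimp q q ∧
      IsBackDiag q q (limp q q) ∧
      limp q (rimp (limp q q) b) = limp q b ∧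
      limp q b = rimp b q ∧
      rimp (limp b (limp q q)) q = rimp b q ∧
      -- m_q is dualizing : m_q ⧸ (b ⧹ m_q) = b = (m_q ⧸ b) ⧹ m_q
      limp q (rimp (limp q q) (rimp (limp b (limp q q)) q)) = b ∧
      rimp (limp (limp q (rimp (limp q q) b)) (limp q q)) q = b := by
  have hcb : ∀ {u : Q}, IsBackDiag q q u → rimp (rimp u q) q = u :=
    fun hu => closed_of_bd hl hr q hcyc hu
  -- q itself is closed
  have hnnq : rimp (rimp q q) q = q := by
    apply le_antisymm
    · apply sSup_le
      intro s hs
      calc s = 1 * s := (one_mul s).symm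
      _ ≤ rimp q q * s := mul_mono_r' hr (one_le_nq hl hr q hcyc) s
      _ ≤ q := hs
    · exact (adj_r hl).mp (nq_mul_q hl hr q hcyc)
  have hbdq : IsBackDiag q q q := by
    constructor
    · rw [hcyc, hnnq]
    · rw [hcyc, hnnq]
  -- closure under composition
  have h1 : IsBackDiag q q (limp b (rimp c q)) := by
    have heq : limp b (rimp c q) = rimp (rimp c q * rimp b q) q := by
      calc limp b (rimp c q) = limp (limp q (rimp b q)) (rimp c q) := by rw [hb.1]
      _ = limp q (rimp c q * rimp b q) := limp_limp hr q _ _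
      _ = rimp (rimp c q * rimp b q) q := hcyc _
    rw [heq]
    exact bd_of_n hl hr q hcyc _
  refine ⟨h1, hbdq, hb.1, limp_nq hl hr q hcyc b hb, ?_, hcyc q, ?_, ?_, hcyc b, ?_, ?_, ?_⟩
  · intro x hx
    constructor
    · -- c ≤ limp b (rimp x q) ↔ limp q (rimp c b) ≤ x
      have hrcb_eq : rimp c b = rimp (rimp b q * c) q := by
        calc rimp c b = rimp c (rimp (rimp b q) q) := by rw [hcb hb]
        _ = rimp (rimp b q * c) q := rimp_rimp hl q _ _
      have hrcb : IsBackDiag q q (rimp c b) := by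
        rw [hrcb_eq]; exact bd_of_n hl hr q hcyc _
      calc c ≤ limp b (rimp x q) ↔ c * rimp x q ≤ b := (adj_l hr).symm
      _ ↔ rimp x q ≤ rimp c b := adj_r hl
      _ ↔ rimp (rimp c b) q ≤ x := (n_le_closed hl hr q hcyc hrcb hx).symm
      _ ↔ limp q (rimp c b) ≤ x := by rw [hcyc]
    · -- c ≤ limp x (rimp b q) ↔ rimp (limp b c) q ≤ x
      have hlbc_eq : limp b c = rimp (c * rimp b q) q := by
        calc limp b c = limp (limp q (rimp b q)) c := by rw [hb.1]
        _ = limp q (c * rimp b q) := limp_limp hr q _ _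
        _ = rimp (c * rimp b q) q := hcyc _
      have hlbc : IsBackDiag q q (limp b c) := by
        rw [hlbc_eq]; exact bd_of_n hl hr q hcyc _
      calc c ≤ limp x (rimp b q) ↔ c * rimp b q ≤ x := (adj_l hr).symm
      _ ↔ c * rimp b q ≤ rimp (rimp x q) q := by rw [hcb hx]
      _ ↔ rimp x q ≤ rimp (c * rimp b q) q := (gal hl hr q hcyc).symm
      _ ↔ rimp x q ≤ limp b c := by rw [hlbc_eq]
      _ ↔ rimp (limp b c) q ≤ x := (n_le_closed hl hr q hcyc hlbc hx).symm
  · rw [hcyc q]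
    exact bd_of_n hl hr q hcyc q
  · rw [hcyc q, rimp_nq hl hr q hcyc b hb]
  · rw [hcyc q, limp_nq hl hr q hcyc b hb]
  · rw [hcyc q, limp_nq hl hr q hcyc b hb,
      rimp_nq hl hr q hcyc (rimp b q) (bd_of_n hl hr q hcyc b)]
    exact hb.1
  · rw [hcyc q, rimp_nq hl hr q hcyc b hb, hcyc b,
      limp_nq hl hr q hcyc (rimp b q) (bd_of_n hl hr q hcyc b)]
    exact hcb hb
end
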